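/- Let P > 0, let A ∈ ℝ^{m×n} have full column rank, and let S ∈ ℝ^{m×m} be symmetric positive semidefinite. For d > 0 define F(d) = chol( (P⁻¹·I_n + Aᵀ(S + d·I_m)⁻¹A)⁻¹ ). Then for any 0 < d₁ < d₂ and every i = 1, …, n, λ_i(F(d₁)) < λ_i(F(d₂)); that is, each successive minimum λ_i(F(d)) is strictly increasing in d. -/

import Mathlib

open Matrix

noncomputable section

/-- Euclidean norm of a real vector. -/
def euclNorm {m : ℕ} (x : Fin m → ℝ) : ℝ := Real.sqrt (∑ k, x k ^ 2)

/-- The lattice vector `A z` for an integer vector `z`. -/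
def latticeVec {m n : ℕ} (A : Matrix (Fin m) (Fin n) ℝ) (z : Fin n → ℤ) : Fin m → ℝ :=
  A.mulVec fun k => (z k : ℝ)

/-- The `i`-th successive minimum of the lattice generated by `A`: the smallest `r ≥ 0` such
that the closed ball of radius `r` centered at the origin contains `i` linearly independent
lattice vectors. -/
def succMin {m n : ℕ} (A : Matrix (Fin m) (Fin n) ℝ) (i : ℕ) : ℝ :=
  sInf {r : ℝ | 0 ≤ r ∧ ∃ v : Fin i → (Fin n → ℤ),
    LinearIndependent ℝ (fun j => latticeVec A (v j)) ∧
    ∀ j, euclNorm (latticeVec A (v j)) ≤ r}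

/-- `R` is the Cholesky factor of `G`: `R` is upper triangular with positive diagonal
entries and `Rᵀ * R = G`. -/
def IsCholesky {n : ℕ} (G R : Matrix (Fin n) (Fin n) ℝ) : Prop :=
  R.BlockTriangular id ∧ (∀ j, 0 < R j j) ∧ Rᵀ * R = G


lemma posdef_quad {k : ℕ} {M : Matrix (Fin k) (Fin k) ℝ} (hM : M.PosDef)
    {x : Fin k → ℝ} (hx : x ≠ 0) : 0 < x ⬝ᵥ M *ᵥ x := by
  simpa using hM.dotProduct_mulVec_pos hx

lemma possemidef_quad {k : ℕ} {M : Matrix (Fin k) (Fin k) ℝ} (hM : M.PosSemidef)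
    (x : Fin k → ℝ) : 0 ≤ x ⬝ᵥ M *ᵥ x := by
  simpa using hM.dotProduct_mulVec_nonneg x

lemma herm_symm {k : ℕ} {M : Matrix (Fin k) (Fin k) ℝ} (hM : M.IsHermitian) : Mᵀ = M := by
  rwa [Matrix.IsHermitian, conjTranspose] at hM

lemma key_ineq {k : ℕ} {M : Matrix (Fin k) (Fin k) ℝ} (hM : M.PosDef) (x y : Fin k → ℝ) :
    2 * (x ⬝ᵥ y) - y ⬝ᵥ M *ᵥ y ≤ x ⬝ᵥ M⁻¹ *ᵥ x := by
  have hsymm : Mᵀ = M := herm_symm hM.1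
  set w := M⁻¹ *ᵥ x with hw
  have hMw : M *ᵥ w = x := by
    rw [hw, mulVec_mulVec, Matrix.mul_nonsing_inv _ hM.det_pos.ne'.isUnit, one_mulVec]
  have h0 : 0 ≤ (w - y) ⬝ᵥ M *ᵥ (w - y) := possemidef_quad hM.posSemidef _
  have e1 : w ⬝ᵥ M *ᵥ y = x ⬝ᵥ y := by
    rw [dotProduct_mulVec, ← hsymm, vecMul_transpose, hMw]
  have e2 : w ⬝ᵥ M *ᵥ w = x ⬝ᵥ w := by
    rw [dotProduct_mulVec, ← hsymm, vecMul_transpose, hMw]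
  have e3 : y ⬝ᵥ M *ᵥ w = y ⬝ᵥ x := by rw [hMw]
  have hexp : (w - y) ⬝ᵥ M *ᵥ (w - y)
      = x ⬝ᵥ w - x ⬝ᵥ y - (y ⬝ᵥ x) + y ⬝ᵥ M *ᵥ y := by
    rw [Matrix.mulVec_sub, dotProduct_sub, sub_dotProduct, sub_dotProduct,
      e1, e2, e3]
    ring
  have hc : y ⬝ᵥ x = x ⬝ᵥ y := dotProduct_comm _ _
  have hc2 : x ⬝ᵥ M⁻¹ *ᵥ x = x ⬝ᵥ w := rfl
  rw [hc2]
  linarith [hexp ▸ h0, hc]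

lemma quad_sub {k : ℕ} (M1 M2 : Matrix (Fin k) (Fin k) ℝ) (x : Fin k → ℝ) :
    x ⬝ᵥ (M1 - M2) *ᵥ x = x ⬝ᵥ M1 *ᵥ x - x ⬝ᵥ M2 *ᵥ x := by
  rw [Matrix.sub_mulVec, dotProduct_sub]

lemma inv_quad_lt {k : ℕ} {M1 M2 : Matrix (Fin k) (Fin k) ℝ}
    (h1 : M1.PosDef) (h2 : M2.PosDef)
    (hlt : ∀ x : Fin k → ℝ, x ≠ 0 → 0 < x ⬝ᵥ (M2 - M1) *ᵥ x) :
    ∀ x : Fin k → ℝ, x ≠ 0 → x ⬝ᵥ M2⁻¹ *ᵥ x < x ⬝ᵥ M1⁻¹ *ᵥ x := by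
  intro x hx
  set y := M2⁻¹ *ᵥ x with hy
  have hMy : M2 *ᵥ y = x := by
    rw [hy, mulVec_mulVec, Matrix.mul_nonsing_inv _ h2.det_pos.ne'.isUnit, one_mulVec]
  have hy0 : y ≠ 0 := by
    intro h
    rw [h, Matrix.mulVec_zero] at hMy
    exact hx hMy.symm
  have hk := key_ineq h1 x y
  have e1 : y ⬝ᵥ M2 *ᵥ y = x ⬝ᵥ y := by
    rw [dotProduct_mulVec, ← herm_symm h2.1, vecMul_transpose, hMy]
  have e2 : y ⬝ᵥ M1 *ᵥ y = y ⬝ᵥ M2 *ᵥ y - y ⬝ᵥ (M2 - M1) *ᵥ y := by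
    rw [quad_sub]; ring
  have h3 := hlt y hy0
  have hxy : x ⬝ᵥ M2⁻¹ *ᵥ x = x ⬝ᵥ y := rfl
  rw [hxy]
  calc x ⬝ᵥ y = 2 * (x ⬝ᵥ y) - (x ⬝ᵥ y) := by ring
    _ < 2 * (x ⬝ᵥ y) - (x ⬝ᵥ y - y ⬝ᵥ (M2 - M1) *ᵥ y) := by linarith
    _ = 2 * (x ⬝ᵥ y) - y ⬝ᵥ M1 *ᵥ y := by rw [e2, e1]
    _ ≤ x ⬝ᵥ M1⁻¹ *ᵥ x := hk

lemma quad_continuous {k : ℕ} (M : Matrix (Fin k) (Fin k) ℝ) :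
    Continuous fun x : Fin k → ℝ => x ⬝ᵥ M *ᵥ x := by
  simp only [dotProduct, Matrix.mulVec]
  apply continuous_finset_sum
  intro i _
  apply Continuous.mul (continuous_apply i)
  apply continuous_finset_sum
  intro j _
  exact (continuous_const.mul (continuous_apply j))

lemma quad_smul {k : ℕ} (M : Matrix (Fin k) (Fin k) ℝ) (c : ℝ) (x : Fin k → ℝ) :
    (c • x) ⬝ᵥ M *ᵥ (c • x) = c ^ 2 * (x ⬝ᵥ M *ᵥ x) := by
  rw [Matrix.mulVec_smul, smul_dotProduct, dotProduct_smul]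
  simp [smul_eq_mul]; ring

/-- The minimum of the quadratic form on the unit sphere is attained and bounds below. -/
lemma quad_min {k : ℕ} (hk : 0 < k) (M : Matrix (Fin k) (Fin k) ℝ) :
    ∃ (u : Fin k → ℝ), ‖u‖ = 1 ∧
      ∀ x : Fin k → ℝ, (u ⬝ᵥ M *ᵥ u) * ‖x‖ ^ 2 ≤ x ⬝ᵥ M *ᵥ x := by
  have : Nontrivial (Fin k → ℝ) := by
    have : Nonempty (Fin k) := ⟨⟨0, hk⟩⟩
    infer_instance
  obtain ⟨u, hu, hmin⟩ := (isCompact_sphere (0 : Fin k → ℝ) 1).exists_isMinOn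
    (NormedSpace.sphere_nonempty.2 zero_le_one) (quad_continuous M).continuousOn
  rw [Metric.mem_sphere, dist_zero_right] at hu
  refine ⟨u, hu, fun x => ?_⟩
  by_cases hx : x = 0
  · simp [hx]
  · have hxn : ‖x‖ ≠ 0 := norm_ne_zero_iff.2 hx
    set v : Fin k → ℝ := ‖x‖⁻¹ • x with hv
    have hvs : v ∈ Metric.sphere (0 : Fin k → ℝ) 1 := by
      simp [hv, norm_smul, abs_of_nonneg (inv_nonneg.2 (norm_nonneg x)),
        inv_mul_cancel₀ hxn]
    have h1 := hmin hvs
    have h2 : v ⬝ᵥ M *ᵥ v = ‖x‖⁻¹ ^ 2 * (x ⬝ᵥ M *ᵥ x) := quad_smul M _ x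
    have h3 : (u ⬝ᵥ M *ᵥ u) ≤ ‖x‖⁻¹ ^ 2 * (x ⬝ᵥ M *ᵥ x) := by
      rw [← h2]; exact h1
    have h4 : 0 < ‖x‖ ^ 2 := by positivity
    calc (u ⬝ᵥ M *ᵥ u) * ‖x‖ ^ 2 ≤ (‖x‖⁻¹ ^ 2 * (x ⬝ᵥ M *ᵥ x)) * ‖x‖ ^ 2 := by
          apply mul_le_mul_of_nonneg_right h3 (le_of_lt h4)
      _ = x ⬝ᵥ M *ᵥ x := by field_simp

lemma dot_self_pos {k : ℕ} {x : Fin k → ℝ} (hx : x ≠ 0) : 0 < x ⬝ᵥ x := by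
  rcases lt_or_eq_of_le (Finset.sum_nonneg fun i _ => mul_self_nonneg (x i)) with h | h
  · exact h
  · exact absurd ((dotProduct_self_eq_zero).1 h.symm) hx

lemma posdef_add_smul_one {k : ℕ} {S : Matrix (Fin k) (Fin k) ℝ} (hS : S.PosSemidef)
    {d : ℝ} (hd : 0 < d) : (S + d • (1 : Matrix (Fin k) (Fin k) ℝ)).PosDef := by
  refine posDef_iff_dotProduct_mulVec.mpr ⟨?_, ?_⟩
  · have h1 : ((d : ℝ) • (1 : Matrix (Fin k) (Fin k) ℝ)).IsHermitian := by
      simp [Matrix.IsHermitian]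
    exact hS.1.add h1
  · intro x hx
    have h2 : x ⬝ᵥ (S + d • (1 : Matrix (Fin k) (Fin k) ℝ)) *ᵥ x
        = x ⬝ᵥ S *ᵥ x + d * (x ⬝ᵥ x) := by
      rw [Matrix.add_mulVec, dotProduct_add, Matrix.smul_mulVec, Matrix.one_mulVec,
        dotProduct_smul, smul_eq_mul]
    have := possemidef_quad hS x
    have := dot_self_pos hx
    simp only [star_trivial]
    rw [h2]
    nlinarith

lemma quad_smul_one {k : ℕ} (c : ℝ) (x : Fin k → ℝ) :
    x ⬝ᵥ (c • (1 : Matrix (Fin k) (Fin k) ℝ)) *ᵥ x = c * (x ⬝ᵥ x) := by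
  rw [Matrix.smul_mulVec, Matrix.one_mulVec, dotProduct_smul, smul_eq_mul]

lemma quad_sandwich {m n : ℕ} (A : Matrix (Fin m) (Fin n) ℝ) (X : Matrix (Fin m) (Fin m) ℝ)
    (x : Fin n → ℝ) :
    x ⬝ᵥ (Aᵀ * X * A) *ᵥ x = (A *ᵥ x) ⬝ᵥ X *ᵥ (A *ᵥ x) := by
  rw [← mulVec_mulVec, ← mulVec_mulVec, dotProduct_mulVec, vecMul_transpose]

lemma euclNorm_mulVec {n : ℕ} (F : Matrix (Fin n) (Fin n) ℝ) (x : Fin n → ℝ) :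
    Real.sqrt (∑ k, (F *ᵥ x) k ^ 2) = Real.sqrt (x ⬝ᵥ (Fᵀ * F) *ᵥ x) := by
  congr 1
  rw [← mulVec_mulVec, dotProduct_mulVec, vecMul_transpose]
  simp [dotProduct, sq]

lemma rank_inj {m n : ℕ} {A : Matrix (Fin m) (Fin n) ℝ} (hA : A.rank = n) :
    ∀ x : Fin n → ℝ, A *ᵥ x = 0 → x = 0 := by
  have h1 : LinearMap.ker A.mulVecLin = ⊥ := by
    have h2 := A.mulVecLin.finrank_range_add_finrank_ker
    rw [Matrix.rank] at hA
    have h3 : Module.finrank ℝ (Fin n → ℝ) = n := by simp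
    rw [hA, h3] at h2
    have h4 : Module.finrank ℝ (LinearMap.ker A.mulVecLin) = 0 := by omega
    exact Submodule.finrank_eq_zero.1 h4
  intro x hx
  have : x ∈ LinearMap.ker A.mulVecLin := by
    simpa [Matrix.mulVecLin_apply] using hx
  rwa [h1, Submodule.mem_bot] at this

lemma lin_transfer {n i : ℕ} {F F' : Matrix (Fin n) (Fin n) ℝ}
    (hF' : Function.Injective F'.mulVec)
    {v : Fin i → (Fin n → ℝ)}
    (h : LinearIndependent ℝ (fun j => F *ᵥ (v j))) :
    LinearIndependent ℝ (fun j => F' *ᵥ (v j)) := by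
  have h0 : LinearIndependent ℝ v :=
    LinearIndependent.of_comp F.mulVecLin (by simpa [Function.comp_def, mulVecLin_apply] using h)
  have hker : LinearMap.ker F'.mulVecLin = ⊥ := by
    rw [LinearMap.ker_eq_bot]
    intro a b hab
    exact hF' (by simpa [mulVecLin_apply] using hab)
  have := h0.map' F'.mulVecLin hker
  simpa [Function.comp_def, mulVecLin_apply] using this

lemma cholesky_inj {n : ℕ} {R : Matrix (Fin n) (Fin n) ℝ}
    (hR : R.BlockTriangular id) (hdiag : ∀ j, 0 < R j j) :
    Function.Injective R.mulVec := by
  have hdet : R.det = ∏ j, R j j := Matrix.det_of_upperTriangular hR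
  have : IsUnit R.det := by
    rw [hdet]
    exact (Finset.prod_pos (fun j _ => hdiag j)).ne'.isUnit
  exact Matrix.mulVec_injective_iff_isUnit.2 (Matrix.isUnit_iff_isUnit_det R |>.2 this)


lemma posdef_H {m n : ℕ} {A : Matrix (Fin m) (Fin n) ℝ}
    (hAinj : ∀ x : Fin n → ℝ, A *ᵥ x = 0 → x = 0)
    {N : Matrix (Fin m) (Fin m) ℝ} (hN : N.PosDef) {P : ℝ} (hP : 0 < P) :
    (P⁻¹ • (1 : Matrix (Fin n) (Fin n) ℝ) + Aᵀ * N⁻¹ * A).PosDef := by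
  refine posDef_iff_dotProduct_mulVec.mpr ⟨?_, ?_⟩
  · have hinv : (N⁻¹)ᴴ = N⁻¹ := (hN.inv).1
    have hT : ∀ {p q : ℕ} (B : Matrix (Fin p) (Fin q) ℝ), Bᴴ = Bᵀ := by
      intro p q B; ext a b; simp [conjTranspose_apply]
    show _ᴴ = _
    rw [conjTranspose_add, conjTranspose_smul, conjTranspose_one, conjTranspose_mul,
      conjTranspose_mul, hT Aᵀ, transpose_transpose, hinv, hT A]
    simp [star_trivial, Matrix.mul_assoc]
  · intro x hx
    simp only [star_trivial]
    rw [Matrix.add_mulVec, dotProduct_add, quad_smul_one, quad_sandwich]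
    have hAx : A *ᵥ x ≠ 0 := fun h => hx (hAinj x h)
    have h1 : 0 < P⁻¹ * (x ⬝ᵥ x) := mul_pos (by positivity) (dot_self_pos hx)
    have h2 : 0 < (A *ᵥ x) ⬝ᵥ N⁻¹ *ᵥ (A *ᵥ x) := posdef_quad hN.inv hAx
    linarith

theorem statement13 {m n : ℕ} (P : ℝ) (hP : 0 < P)
    (A : Matrix (Fin m) (Fin n) ℝ) (hA : A.rank = n)
    (S : Matrix (Fin m) (Fin m) ℝ) (hS : S.PosSemidef)
    (d1 d2 : ℝ) (hd1 : 0 < d1) (hd12 : d1 < d2)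
    (F1 F2 : Matrix (Fin n) (Fin n) ℝ)
    (hF1 : IsCholesky
      ((P⁻¹ • (1 : Matrix (Fin n) (Fin n) ℝ) +
        Aᵀ * (S + d1 • (1 : Matrix (Fin m) (Fin m) ℝ))⁻¹ * A)⁻¹) F1)
    (hF2 : IsCholesky
      ((P⁻¹ • (1 : Matrix (Fin n) (Fin n) ℝ) +
        Aᵀ * (S + d2 • (1 : Matrix (Fin m) (Fin m) ℝ))⁻¹ * A)⁻¹) F2) :
    ∀ i : ℕ, 1 ≤ i → i ≤ n → succMin F1 i < succMin F2 i := by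
  intro i hi1 hin
  have hn : 0 < n := lt_of_lt_of_le hi1 hin
  set N1 := S + d1 • (1 : Matrix (Fin m) (Fin m) ℝ) with hN1
  set N2 := S + d2 • (1 : Matrix (Fin m) (Fin m) ℝ) with hN2
  have hN1pd : N1.PosDef := posdef_add_smul_one hS hd1
  have hN2pd : N2.PosDef := posdef_add_smul_one hS (hd1.trans hd12)
  have hAinj := rank_inj hA
  have hdiff : N2 - N1 = (d2 - d1) • (1 : Matrix (Fin m) (Fin m) ℝ) := by
    rw [hN1, hN2, sub_smul]; abel
  have hNlt : ∀ x : Fin m → ℝ, x ≠ 0 → 0 < x ⬝ᵥ (N2 - N1) *ᵥ x := by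
    intro x hx
    rw [hdiff, quad_smul_one]
    exact mul_pos (by linarith) (dot_self_pos hx)
  have hNinv := inv_quad_lt hN1pd hN2pd hNlt
  set H1 := P⁻¹ • (1 : Matrix (Fin n) (Fin n) ℝ) + Aᵀ * N1⁻¹ * A with hH1
  set H2 := P⁻¹ • (1 : Matrix (Fin n) (Fin n) ℝ) + Aᵀ * N2⁻¹ * A with hH2
  have hH1pd : H1.PosDef := posdef_H hAinj hN1pd hP
  have hH2pd : H2.PosDef := posdef_H hAinj hN2pd hP
  have hH12 : ∀ x : Fin n → ℝ, x ≠ 0 → 0 < x ⬝ᵥ (H1 - H2) *ᵥ x := by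
    intro x hx
    have hAx : A *ᵥ x ≠ 0 := fun h => hx (hAinj x h)
    have q1 : x ⬝ᵥ H1 *ᵥ x
        = P⁻¹ * (x ⬝ᵥ x) + (A *ᵥ x) ⬝ᵥ N1⁻¹ *ᵥ (A *ᵥ x) := by
      rw [hH1, Matrix.add_mulVec, dotProduct_add, quad_smul_one, quad_sandwich]
    have q2 : x ⬝ᵥ H2 *ᵥ x
        = P⁻¹ * (x ⬝ᵥ x) + (A *ᵥ x) ⬝ᵥ N2⁻¹ *ᵥ (A *ᵥ x) := by
      rw [hH2, Matrix.add_mulVec, dotProduct_add, quad_smul_one, quad_sandwich]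
    have h3 := hNinv (A *ᵥ x) hAx
    rw [quad_sub]
    linarith
  have hGlt := inv_quad_lt hH2pd hH1pd hH12
  set G1 := F1ᵀ * F1 with hG1
  set G2 := F2ᵀ * F2 with hG2
  have hG1e : G1 = H1⁻¹ := hF1.2.2
  have hG2e : G2 = H2⁻¹ := hF2.2.2
  have hq12 : ∀ x : Fin n → ℝ, x ≠ 0 → x ⬝ᵥ G1 *ᵥ x < x ⬝ᵥ G2 *ᵥ x := by
    intro x hx
    rw [hG1e, hG2e]
    exact hGlt x hx
  have hG1pos : ∀ x : Fin n → ℝ, x ≠ 0 → 0 < x ⬝ᵥ G1 *ᵥ x := by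
    intro x hx; rw [hG1e]; exact posdef_quad hH1pd.inv hx
  have hG2pos : ∀ x : Fin n → ℝ, x ≠ 0 → 0 < x ⬝ᵥ G2 *ᵥ x := by
    intro x hx; rw [hG2e]; exact posdef_quad hH2pd.inv hx
  -- constants from compactness
  obtain ⟨u, hun, hud⟩ := quad_min hn (G2 - G1)
  set δ := u ⬝ᵥ (G2 - G1) *ᵥ u with hδ
  have hu0 : u ≠ 0 := by intro h; rw [h] at hun; simp at hun
  have hδpos : 0 < δ := by
    rw [hδ, quad_sub]
    linarith [hq12 u hu0]
  obtain ⟨u1, hu1n, hu1d⟩ := quad_min hn (-G1)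
  set C := u1 ⬝ᵥ G1 *ᵥ u1 with hC
  have hu10 : u1 ≠ 0 := by intro h; rw [h] at hu1n; simp at hu1n
  have hCpos : 0 < C := hG1pos u1 hu10
  have hCub : ∀ x : Fin n → ℝ, x ⬝ᵥ G1 *ᵥ x ≤ C * ‖x‖ ^ 2 := by
    intro x
    have h1 := hu1d x
    have e : ∀ y : Fin n → ℝ, y ⬝ᵥ (-G1) *ᵥ y = -(y ⬝ᵥ G1 *ᵥ y) := by
      intro y; rw [Matrix.neg_mulVec, dotProduct_neg]
    rw [e, e] at h1
    nlinarith [h1]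
  obtain ⟨u2, hu2n, hu2d⟩ := quad_min hn G2
  set δ2 := u2 ⬝ᵥ G2 *ᵥ u2 with hδ2
  have hu20 : u2 ≠ 0 := by intro h; rw [h] at hu2n; simp at hu2n
  have hδ2pos : 0 < δ2 := hG2pos u2 hu20
  -- the scaling constant
  set c := Real.sqrt (1 + δ / C) with hc
  have hcsq : c ^ 2 = 1 + δ / C := Real.sq_sqrt (by positivity)
  have hc1 : 1 < c := by nlinarith [Real.sqrt_nonneg (1 + δ / C), div_pos hδpos hCpos]
  have hcpos : 0 < c := lt_trans one_pos hc1
  -- pointwise norm comparison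
  have key : ∀ x : Fin n → ℝ, c * euclNorm (F1 *ᵥ x) ≤ euclNorm (F2 *ᵥ x) := by
    intro x
    have hq1C := hCub x
    have hDx := hud x
    have hq1nn : 0 ≤ x ⬝ᵥ G1 *ᵥ x := by
      rw [hG1e]; exact possemidef_quad hH1pd.inv.posSemidef x
    have step : c ^ 2 * (x ⬝ᵥ G1 *ᵥ x) ≤ x ⬝ᵥ G2 *ᵥ x := by
      rw [hcsq]
      have h5 : (δ / C) * (x ⬝ᵥ G1 *ᵥ x) ≤ δ * ‖x‖ ^ 2 := by
        have h6 : (δ / C) * (x ⬝ᵥ G1 *ᵥ x) ≤ (δ / C) * (C * ‖x‖ ^ 2) :=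
          mul_le_mul_of_nonneg_left hq1C (by positivity)
        have h7 : (δ / C) * (C * ‖x‖ ^ 2) = δ * ‖x‖ ^ 2 := by
          field_simp
        linarith
      have h8 := quad_sub G2 G1 x
      linarith
    have e1 : euclNorm (F1 *ᵥ x) = Real.sqrt (x ⬝ᵥ G1 *ᵥ x) := by
      rw [euclNorm, euclNorm_mulVec, ← hG1]
    have e2 : euclNorm (F2 *ᵥ x) = Real.sqrt (x ⬝ᵥ G2 *ᵥ x) := by
      rw [euclNorm, euclNorm_mulVec, ← hG2]
    rw [e1, e2]
    calc c * Real.sqrt (x ⬝ᵥ G1 *ᵥ x) = Real.sqrt (c ^ 2 * (x ⬝ᵥ G1 *ᵥ x)) := by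
          rw [Real.sqrt_mul (by positivity), Real.sqrt_sq hcpos.le]
      _ ≤ Real.sqrt (x ⬝ᵥ G2 *ᵥ x) := Real.sqrt_le_sqrt step
  -- injectivity of the Cholesky factors
  have hinj1 : Function.Injective F1.mulVec := cholesky_inj hF1.1 hF1.2.1
  have hinj2 : Function.Injective F2.mulVec := cholesky_inj hF2.1 hF2.2.1
  -- the sets
  unfold succMin
  set T1 := {r : ℝ | 0 ≤ r ∧ ∃ v : Fin i → (Fin n → ℤ),
    LinearIndependent ℝ (fun j => latticeVec F1 (v j)) ∧
    ∀ j, euclNorm (latticeVec F1 (v j)) ≤ r} with hT1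
  set T2 := {r : ℝ | 0 ≤ r ∧ ∃ v : Fin i → (Fin n → ℤ),
    LinearIndependent ℝ (fun j => latticeVec F2 (v j)) ∧
    ∀ j, euclNorm (latticeVec F2 (v j)) ≤ r} with hT2
  have hbdd1 : BddBelow T1 := ⟨0, fun r hr => hr.1⟩
  have hne : ∀ (F : Matrix (Fin n) (Fin n) ℝ), Function.Injective F.mulVec →
      {r : ℝ | 0 ≤ r ∧ ∃ v : Fin i → (Fin n → ℤ),
        LinearIndependent ℝ (fun j => latticeVec F (v j)) ∧
        ∀ j, euclNorm (latticeVec F (v j)) ≤ r}.Nonempty := by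
    intro F hinj
    set v : Fin i → (Fin n → ℤ) := fun j k => if k = Fin.castLE hin j then 1 else 0 with hv
    have hcast : ∀ j, (fun k => ((v j k : ℤ) : ℝ)) = (Pi.single (Fin.castLE hin j) (1:ℝ) : Fin n → ℝ) := by
      intro j; funext k
      simp [hv, Pi.single_apply, apply_ite (fun t : ℤ => (t : ℝ))]
    have hfam : (fun j => latticeVec F (v j))
        = fun j => F.mulVecLin (Pi.single (Fin.castLE hin j) (1:ℝ) : Fin n → ℝ) := by
      funext j; rw [latticeVec, hcast j, mulVecLin_apply]
    have hb : LinearIndependent ℝ (fun j : Fin i => (Pi.single (Fin.castLE hin j) (1:ℝ) : Fin n → ℝ)) := by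
      have h1 := (Pi.basisFun ℝ (Fin n)).linearIndependent
      have h2 := h1.comp (Fin.castLE hin) (Fin.castLE_injective hin)
      have h3 : ⇑(Pi.basisFun ℝ (Fin n)) ∘ Fin.castLE hin
          = fun j : Fin i => (Pi.single (Fin.castLE hin j) (1:ℝ) : Fin n → ℝ) := by
        funext j; simp [Function.comp, Pi.basisFun_apply]
      rwa [h3] at h2
    have hker : LinearMap.ker F.mulVecLin = ⊥ := by
      rw [LinearMap.ker_eq_bot]
      intro a b hab
      exact hinj (by simpa [mulVecLin_apply] using hab)
    have hlin : LinearIndependent ℝ (fun j => latticeVec F (v j)) := by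
      rw [hfam]
      exact hb.map' F.mulVecLin hker
    have hnn : ∀ j : Fin i, 0 ≤ euclNorm (latticeVec F (v j)) := by
      intro j; rw [euclNorm]; exact Real.sqrt_nonneg _
    refine ⟨∑ j, euclNorm (latticeVec F (v j)),
      Finset.sum_nonneg (fun j _ => hnn j), v, hlin, fun j => ?_⟩
    exact Finset.single_le_sum (f := fun j => euclNorm (latticeVec F (v j)))
      (fun j _ => hnn j) (Finset.mem_univ j)
  -- lower bound for T2
  have hlow : ∀ r ∈ T2, Real.sqrt δ2 ≤ r := by
    intro r hr
    obtain ⟨hr0, v, hlin, hbd⟩ := hr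
    have hj0 : (0 : ℕ) < i := hi1
    set j0 : Fin i := ⟨0, hj0⟩ with hj0d
    have hne0 : latticeVec F2 (v j0) ≠ 0 := hlin.ne_zero j0
    set z : Fin n → ℝ := fun k => ((v j0 k : ℤ) : ℝ) with hz
    have hlv : latticeVec F2 (v j0) = F2 *ᵥ z := by rw [latticeVec]
    have hz0 : z ≠ 0 := by
      intro h
      apply hne0
      rw [hlv, h, Matrix.mulVec_zero]
    have h1z : 1 ≤ ‖z‖ := by
      have hek : ∃ k, z k ≠ 0 := by
        by_contra h; push_neg at h; exact hz0 (funext h)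
      obtain ⟨k, hk⟩ := hek
      have hvk : v j0 k ≠ 0 := by
        intro h; apply hk; rw [hz]; simp [h]
      have hik : (1:ℝ) ≤ |z k| := by
        rw [hz]
        simp only []
        rw [← Int.cast_abs]
        exact_mod_cast Int.one_le_abs hvk
      calc (1:ℝ) ≤ |z k| := hik
        _ ≤ ‖z‖ := by simpa [Real.norm_eq_abs] using norm_le_pi_norm z k
    have hq : δ2 ≤ z ⬝ᵥ G2 *ᵥ z := by
      have h9 := hu2d z
      have hz2 : 1 ≤ ‖z‖ ^ 2 := by nlinarith [h1z]
      calc δ2 = δ2 * 1 := by ring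
        _ ≤ δ2 * ‖z‖ ^ 2 := mul_le_mul_of_nonneg_left hz2 hδ2pos.le
        _ ≤ z ⬝ᵥ G2 *ᵥ z := h9
    have h10 : Real.sqrt δ2 ≤ euclNorm (latticeVec F2 (v j0)) := by
      rw [hlv, euclNorm, euclNorm_mulVec, ← hG2]
      exact Real.sqrt_le_sqrt hq
    exact h10.trans (hbd j0)
  have hInf2 : Real.sqrt δ2 ≤ sInf T2 := le_csInf (hne F2 hinj2) hlow
  have h2pos : 0 < Real.sqrt δ2 := Real.sqrt_pos.2 hδ2pos
  -- transfer bound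
  have htrans : ∀ r ∈ T2, c * sInf T1 ≤ r := by
    intro r hr
    obtain ⟨hr0, v, hlin, hbd⟩ := hr
    have hmem : r / c ∈ T1 := by
      refine ⟨div_nonneg hr0 hcpos.le, v, ?_, ?_⟩
      · simp only [latticeVec] at hlin ⊢
        exact lin_transfer hinj1 hlin
      · intro j
        have hk := key (fun k => ((v j k : ℤ) : ℝ))
        have hb := hbd j
        have : euclNorm (latticeVec F1 (v j)) * c ≤ r := by
          have e : latticeVec F1 (v j) = F1 *ᵥ (fun k => ((v j k : ℤ) : ℝ)) := by
            rw [latticeVec]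
          have e2 : latticeVec F2 (v j) = F2 *ᵥ (fun k => ((v j k : ℤ) : ℝ)) := by
            rw [latticeVec]
          rw [e]
          calc euclNorm (F1 *ᵥ fun k => ((v j k : ℤ) : ℝ)) * c
              = c * euclNorm (F1 *ᵥ fun k => ((v j k : ℤ) : ℝ)) := by ring
            _ ≤ euclNorm (F2 *ᵥ fun k => ((v j k : ℤ) : ℝ)) := hk
            _ = euclNorm (latticeVec F2 (v j)) := by rw [e2]
            _ ≤ r := hb
        exact (le_div_iff₀ hcpos).2 this
    have h11 : sInf T1 ≤ r / c := csInf_le hbdd1 hmem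
    calc c * sInf T1 ≤ c * (r / c) := mul_le_mul_of_nonneg_left h11 hcpos.le
      _ = r := by field_simp
  have hInfc : c * sInf T1 ≤ sInf T2 := le_csInf (hne F2 hinj2) htrans
  have hT1nn : 0 ≤ sInf T1 := le_csInf (hne F1 hinj1) (fun r hr => hr.1)
  rcases eq_or_lt_of_le hT1nn with h | h
  · rw [← h]
    exact lt_of_lt_of_le h2pos hInf2
  · exact (lt_mul_of_one_lt_left h hc1).trans_le hInfc
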